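/- There is no 8-divisible multiset of points in PG(v-1,2) of cardinality 24 with all point multiplicities at most 3. -/

import Mathlib

open scoped Classical

noncomputable def MVal {F V : Type*} [Field F] [AddCommGroup V] [Module F V]
    (M : Projectivization F V → ℕ) (K : Submodule F V) : ℕ :=
  ∑ᶠ P ∈ {P : Projectivization F V | P.submodule ≤ K}, M P

def IsDivisible {F V : Type*} [Field F] [AddCommGroup V] [Module F V] (Δ : ℕ)
    (M : Projectivization F V → ℕ) : Prop :=
  ∀ H : Submodule F V, Module.finrank F H + 1 = Module.finrank F V →
    MVal M H ≡ MVal M ⊤ [MOD Δ]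

def IsSpanning {F V : Type*} [Field F] [AddCommGroup V] [Module F V]
    (M : Projectivization F V → ℕ) : Prop :=
  (⨆ P ∈ {P : Projectivization F V | 0 < M P}, P.submodule) = ⊤

def gaussNum (q k : ℕ) : ℕ := ∑ i ∈ Finset.range k, q ^ i

def IsProjBase {F V : Type*} [Field F] [AddCommGroup V] [Module F V]
    (n : ℕ) (B : Finset (Projectivization F V)) : Prop :=
  B.card = n ∧ ∀ T ⊆ B, T.card = n - 1 →
    Module.finrank F ((⨆ P ∈ T, Projectivization.submodule P) : Submodule F V) = n - 1

/- ### Auxiliary development -/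

section Aux

open Finset Module

variable {V : Type*} [AddCommGroup V] [Module (ZMod 2) V]

private lemma zmod2_eq_one {c : ZMod 2} (h : c ≠ 0) : c = 1 := by
  revert h; revert c; decide

private lemma zmod2_units (u : (ZMod 2)ˣ) : (u : ZMod 2) = 1 := by
  revert u; decide

private lemma add_self_zmod2 (x : V) : x + x = 0 := by
  have h : ((1 : ZMod 2) + 1) • x = x + x := by rw [add_smul, one_smul]
  have h2 : ((1 : ZMod 2) + 1) = 0 := by decide
  rw [h2, zero_smul] at h
  exact h.symm

private noncomputable instance fintypeDual [Fintype V] :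
    Fintype (Module.Dual (ZMod 2) V) := by
  have : Finite (Module.Dual (ZMod 2) V) :=
    Finite.of_injective (fun ℓ => (ℓ : V → ZMod 2)) DFunLike.coe_injective
  exact Fintype.ofFinite _

/-- Dual coordinate functional for an element of a linearly independent set. -/
private lemma exists_coord {s : Set V}
    (hli : LinearIndependent (ZMod 2) ((↑) : s → V)) {x : V} (hx : x ∈ s) :
    ∃ ℓ : Module.Dual (ZMod 2) V, ℓ x = 1 ∧ ∀ y ∈ s, y ≠ x → ℓ y = 0 := by
  classical
  have hli' : LinearIndepOn (ZMod 2) id s := hli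
  have hsub : s ⊆ hli'.extend (Set.subset_univ s) := hli'.subset_extend _
  set b : Basis _ (ZMod 2) V := Basis.extend hli' with hbdef
  set j : hli'.extend (Set.subset_univ s) := ⟨x, hsub hx⟩ with hjdef
  refine ⟨b.coord j, ?_, ?_⟩
  · have hb : b j = x := Basis.extend_apply_self hli' j
    rw [← hb, Basis.coord_apply, Basis.repr_self]
    simp
  · intro y hy hyx
    set jy : hli'.extend (Set.subset_univ s) := ⟨y, hsub hy⟩ with hjydef
    have hb : b jy = y := Basis.extend_apply_self hli' jy
    rw [← hb, Basis.coord_apply, Basis.repr_self, Finsupp.single_apply]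
    have hne : jy ≠ j := by
      rw [hjydef, hjdef]
      simp only [ne_eq, Subtype.mk.injEq]
      exact hyx
    simp [hne]

private lemma filter_card_eq_nat_card {α : Type*} [Fintype α] (p : α → Prop)
    [DecidablePred p] :
    (Finset.univ.filter p).card = Nat.card {a : α // p a} := by
  rw [Nat.card_eq_fintype_card, Fintype.card_subtype]

/-- Cardinality of the vanishing set of a surjective linear map defined on the dual. -/
private lemma card_filter_ker [Fintype V] {W : Type*} [AddCommGroup W]
    [Module (ZMod 2) W] [Fintype W]
    (φ : Module.Dual (ZMod 2) V →ₗ[ZMod 2] W) (hsurj : Function.Surjective φ) :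
    Nat.card {ℓ : Module.Dual (ZMod 2) V // φ ℓ = 0}
      = 2 ^ (finrank (ZMod 2) V - finrank (ZMod 2) W) := by
  classical
  have h2 : Nat.card {ℓ : Module.Dual (ZMod 2) V // φ ℓ = 0}
      = Nat.card (LinearMap.ker φ) :=
    Nat.card_congr (Equiv.subtypeEquivRight (fun ℓ => by simp [LinearMap.mem_ker]))
  have h3 : Nat.card (LinearMap.ker φ)
      = 2 ^ finrank (ZMod 2) (LinearMap.ker φ) := by
    rw [Nat.card_eq_fintype_card, card_eq_pow_finrank (K := ZMod 2), ZMod.card]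
  have h4 := LinearMap.finrank_range_add_finrank_ker φ
  rw [LinearMap.range_eq_top.mpr hsurj, finrank_top] at h4
  have h5 : finrank (ZMod 2) (Module.Dual (ZMod 2) V) = finrank (ZMod 2) V :=
    Subspace.dual_finrank_eq
  rw [h2, h3]
  congr 1
  omega

private lemma card_single [Fintype V] {x : V} (hx : x ≠ 0) :
    (Finset.univ.filter fun ℓ : Module.Dual (ZMod 2) V => ℓ x = 0).card
      = 2 ^ (finrank (ZMod 2) V - 1) := by
  classical
  have hex : ∃ ℓ : Module.Dual (ZMod 2) V, ℓ x ≠ 0 := by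
    by_contra h
    push_neg at h
    exact hx ((Module.forall_dual_apply_eq_zero_iff (ZMod 2) x).mp h)
  obtain ⟨ℓ0, hℓ0⟩ := hex
  have hℓ01 : ℓ0 x = 1 := zmod2_eq_one hℓ0
  have hsurj : Function.Surjective
      ((LinearMap.applyₗ (R := ZMod 2) x : Module.Dual (ZMod 2) V →ₗ[ZMod 2] ZMod 2)) := by
    intro c
    refine ⟨c • ℓ0, ?_⟩
    simp [LinearMap.applyₗ_apply_apply, hℓ01]
  have h := card_filter_ker _ hsurj
  rw [Module.finrank_self] at h
  rw [filter_card_eq_nat_card, ← h]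
  exact Nat.card_congr (Equiv.subtypeEquivRight (fun ℓ => by simp [LinearMap.applyₗ_apply_apply]))

private lemma card_pair [Fintype V] {x y : V} (hx : x ≠ 0) (hy : y ≠ 0) (hxy : x ≠ y)
    (hn : 2 ≤ finrank (ZMod 2) V) :
    (Finset.univ.filter fun ℓ : Module.Dual (ZMod 2) V => ℓ x = 0 ∧ ℓ y = 0).card
      = 2 ^ (finrank (ZMod 2) V - 2) := by
  classical
  have hone : ((1 : ZMod 2) + 1) = 0 := by decide
  have hxyne : x + y ≠ 0 := by
    intro h
    apply hxy
    have h2 : x = x + (y + y) := by rw [add_self_zmod2, add_zero]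
    rw [h2, ← add_assoc, h, zero_add]
  have c1 := card_single (V := V) hx
  have c2 := card_single (V := V) hy
  have c3 := card_single (V := V) hxyne
  have hD : Fintype.card (Module.Dual (ZMod 2) V) = 2 ^ finrank (ZMod 2) V := by
    rw [card_eq_pow_finrank (K := ZMod 2), ZMod.card, Subspace.dual_finrank_eq]
  -- express the four counts via indicator sums
  have key1 : ∀ ℓ : Module.Dual (ZMod 2) V,
      (if ℓ x = 0 then (1 : ℕ) else 0)
        = (if ℓ x = 0 ∧ ℓ y = 0 then (1 : ℕ) else 0)
          + (if ℓ x = 0 ∧ ¬ ℓ y = 0 then (1 : ℕ) else 0) := by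
    intro ℓ
    by_cases h1 : ℓ x = 0 <;> by_cases h2 : ℓ y = 0 <;> simp [h1, h2]
  have key1y : ∀ ℓ : Module.Dual (ZMod 2) V,
      (if ℓ y = 0 then (1 : ℕ) else 0)
        = (if ℓ x = 0 ∧ ℓ y = 0 then (1 : ℕ) else 0)
          + (if ¬ ℓ x = 0 ∧ ℓ y = 0 then (1 : ℕ) else 0) := by
    intro ℓ
    by_cases h1 : ℓ x = 0 <;> by_cases h2 : ℓ y = 0 <;> simp [h1, h2]
  have key2 : ∀ ℓ : Module.Dual (ZMod 2) V,
      (if ℓ (x + y) = 0 then (1 : ℕ) else 0)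
        = (if ℓ x = 0 ∧ ℓ y = 0 then (1 : ℕ) else 0)
          + (if ¬ ℓ x = 0 ∧ ¬ ℓ y = 0 then (1 : ℕ) else 0) := by
    intro ℓ
    have hadd : ℓ (x + y) = ℓ x + ℓ y := map_add ℓ x y
    by_cases h1 : ℓ x = 0 <;> by_cases h2 : ℓ y = 0
    · simp [hadd, h1, h2]
    · simp [hadd, h1, h2]
    · simp [hadd, h1, h2]
    · rw [hadd, zmod2_eq_one h1, zmod2_eq_one h2]
      simp [hone, h1, h2]
  have key3 : ∀ ℓ : Module.Dual (ZMod 2) V,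
      (1 : ℕ) = (if ℓ x = 0 ∧ ℓ y = 0 then (1 : ℕ) else 0)
          + (if ℓ x = 0 ∧ ¬ ℓ y = 0 then (1 : ℕ) else 0)
          + (if ¬ ℓ x = 0 ∧ ℓ y = 0 then (1 : ℕ) else 0)
          + (if ¬ ℓ x = 0 ∧ ¬ ℓ y = 0 then (1 : ℕ) else 0) := by
    intro ℓ
    by_cases h1 : ℓ x = 0 <;> by_cases h2 : ℓ y = 0 <;> simp [h1, h2]
  have e1 : (Finset.univ.filter fun ℓ : Module.Dual (ZMod 2) V => ℓ x = 0 ∧ ℓ y = 0).card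
      + (Finset.univ.filter fun ℓ : Module.Dual (ZMod 2) V => ℓ x = 0 ∧ ¬ ℓ y = 0).card
      = 2 ^ (finrank (ZMod 2) V - 1) := by
    rw [Finset.card_filter, Finset.card_filter, ← Finset.sum_add_distrib, ← c1,
      Finset.card_filter]
    exact (Finset.sum_congr rfl fun ℓ _ => key1 ℓ).symm
  have e2 : (Finset.univ.filter fun ℓ : Module.Dual (ZMod 2) V => ℓ x = 0 ∧ ℓ y = 0).card
      + (Finset.univ.filter fun ℓ : Module.Dual (ZMod 2) V => ¬ ℓ x = 0 ∧ ℓ y = 0).card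
      = 2 ^ (finrank (ZMod 2) V - 1) := by
    rw [Finset.card_filter, Finset.card_filter, ← Finset.sum_add_distrib, ← c2,
      Finset.card_filter]
    exact (Finset.sum_congr rfl fun ℓ _ => key1y ℓ).symm
  have e3 : (Finset.univ.filter fun ℓ : Module.Dual (ZMod 2) V => ℓ x = 0 ∧ ℓ y = 0).card
      + (Finset.univ.filter fun ℓ : Module.Dual (ZMod 2) V => ¬ ℓ x = 0 ∧ ¬ ℓ y = 0).card
      = 2 ^ (finrank (ZMod 2) V - 1) := by
    rw [Finset.card_filter, Finset.card_filter, ← Finset.sum_add_distrib, ← c3,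
      Finset.card_filter]
    exact (Finset.sum_congr rfl fun ℓ _ => key2 ℓ).symm
  have e4 : (Finset.univ.filter fun ℓ : Module.Dual (ZMod 2) V => ℓ x = 0 ∧ ℓ y = 0).card
      + (Finset.univ.filter fun ℓ : Module.Dual (ZMod 2) V => ℓ x = 0 ∧ ¬ ℓ y = 0).card
      + (Finset.univ.filter fun ℓ : Module.Dual (ZMod 2) V => ¬ ℓ x = 0 ∧ ℓ y = 0).card
      + (Finset.univ.filter fun ℓ : Module.Dual (ZMod 2) V => ¬ ℓ x = 0 ∧ ¬ ℓ y = 0).card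
      = 2 ^ finrank (ZMod 2) V := by
    rw [Finset.card_filter, Finset.card_filter, Finset.card_filter, Finset.card_filter,
      ← Finset.sum_add_distrib, ← Finset.sum_add_distrib, ← Finset.sum_add_distrib, ← hD,
      ← Finset.card_univ, Finset.card_eq_sum_ones]
    exact Finset.sum_congr rfl fun ℓ _ => (key3 ℓ).symm
  have hp1 : 2 ^ finrank (ZMod 2) V = 2 * 2 ^ (finrank (ZMod 2) V - 1) := by
    rw [← pow_succ']
    congr 1
    omega
  have hp2 : 2 ^ (finrank (ZMod 2) V - 1) = 2 * 2 ^ (finrank (ZMod 2) V - 2) := by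
    rw [← pow_succ']
    congr 1
    omega
  omega

private lemma card_ann [Fintype V] (s : Set V) (hfin : s.Finite)
    (hli : LinearIndependent (ZMod 2) ((↑) : s → V)) :
    (Finset.univ.filter fun ℓ : Module.Dual (ZMod 2) V => ∀ b ∈ s, ℓ b = 0).card
      = 2 ^ (finrank (ZMod 2) V - hfin.toFinset.card) := by
  classical
  set B : Finset V := hfin.toFinset with hB
  let φ : Module.Dual (ZMod 2) V →ₗ[ZMod 2] (↥B → ZMod 2) :=
    LinearMap.pi fun b => LinearMap.applyₗ (b : V)
  have hφ : ∀ ℓ (b : ↥B), φ ℓ b = ℓ (b : V) := by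
    intro ℓ b
    simp [φ, LinearMap.applyₗ_apply_apply]
  have hmem : ∀ z : V, z ∈ B ↔ z ∈ s := by
    intro z
    rw [hB, Set.Finite.mem_toFinset]
  have hker : ∀ ℓ : Module.Dual (ZMod 2) V, (φ ℓ = 0 ↔ ∀ b ∈ s, ℓ b = 0) := by
    intro ℓ
    constructor
    · intro h b hb
      have h2 := congrFun h (⟨b, (hmem b).mpr hb⟩ : ↥B)
      rwa [hφ] at h2
    · intro h
      funext b
      rw [hφ]
      exact h b ((hmem b).mp b.2)
  have hsurj : Function.Surjective φ := by
    intro g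
    choose L hL1 hL2 using fun b : ↥B =>
      exists_coord hli (x := (b : V)) ((hmem b).mp b.2)
    refine ⟨∑ b : ↥B, g b • L b, ?_⟩
    funext b'
    rw [hφ]
    rw [LinearMap.sum_apply]
    rw [Finset.sum_eq_single b']
    · rw [LinearMap.smul_apply, hL1 b', smul_eq_mul, mul_one]
    · intro b _ hne
      rw [LinearMap.smul_apply, hL2 b (b' : V) ((hmem b').mp b'.2)
        (fun h => hne (Subtype.ext h).symm), smul_zero]
    · intro h
      exact absurd (Finset.mem_univ b') h
  have h := card_filter_ker φ hsurj
  rw [Module.finrank_fintype_fun_eq_card, Fintype.card_coe] at h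
  rw [filter_card_eq_nat_card, ← h]
  exact Nat.card_congr (Equiv.subtypeEquivRight (fun ℓ => (hker ℓ).symm))

/-- The bridge between `MVal` and sums of multiplicities over vectors. -/
private lemma MVal_eq_sum [Fintype V] [DecidableEq V]
    (M : Projectivization (ZMod 2) V → ℕ) (K : Submodule (ZMod 2) V) :
    MVal M K = ∑ x ∈ Finset.univ.filter (fun x : V => x ∈ K),
      (if h : x = 0 then 0 else M (Projectivization.mk (ZMod 2) x h)) := by
  classical
  have hfinP : Finite (Projectivization (ZMod 2) V) := by
    apply Finite.of_surjective
      (fun x : {w : V // w ≠ 0} => Projectivization.mk (ZMod 2) x.1 x.2)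
    intro P
    exact ⟨⟨P.rep, P.rep_nonzero⟩, P.mk_rep⟩
  have hfin : ({P : Projectivization (ZMod 2) V | P.submodule ≤ K}).Finite :=
    Set.toFinite _
  have h1 : MVal M K = ∑ P ∈ hfin.toFinset, M P := by
    rw [MVal, finsum_mem_eq_finite_toFinset_sum _ hfin]
  rw [h1]
  have h2 : ∑ P ∈ hfin.toFinset, M P
      = ∑ x ∈ Finset.univ.filter (fun x : V => x ≠ 0 ∧ x ∈ K),
        (if h : x = 0 then 0 else M (Projectivization.mk (ZMod 2) x h)) := by
    refine Finset.sum_bij' (fun P _ => P.rep)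
      (fun x hx => Projectivization.mk (ZMod 2) x
        (by simp only [Finset.mem_filter] at hx; exact hx.2.1)) ?_ ?_ ?_ ?_ ?_
    · intro P hP
      simp only [Set.Finite.mem_toFinset, Set.mem_setOf_eq] at hP
      simp only [Finset.mem_filter, Finset.mem_univ, true_and]
      refine ⟨P.rep_nonzero, ?_⟩
      apply hP
      rw [Projectivization.submodule_eq]
      exact Submodule.mem_span_singleton_self _
    · intro x hx
      simp only [Finset.mem_filter, Finset.mem_univ, true_and] at hx
      simp only [Set.Finite.mem_toFinset, Set.mem_setOf_eq]
      rw [Projectivization.submodule_mk]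
      exact (Submodule.span_singleton_le_iff_mem x K).mpr hx.2
    · intro P hP
      exact P.mk_rep
    · intro x hx
      simp only [Finset.mem_filter, Finset.mem_univ, true_and] at hx
      obtain ⟨a, ha⟩ := Projectivization.exists_smul_eq_mk_rep (ZMod 2) x hx.1
      rw [← ha, Units.smul_def, zmod2_units a, one_smul]
    · intro P hP
      rw [dif_neg P.rep_nonzero]
      congr 1
      exact P.mk_rep.symm
  rw [h2]
  apply Finset.sum_subset
  · intro x hx
    simp only [Finset.mem_filter, Finset.mem_univ, true_and] at hx ⊢
    exact hx.2
  · intro x hx hnx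
    simp only [Finset.mem_filter, Finset.mem_univ, true_and] at hx hnx
    have hx0 : x = 0 := by
      by_contra h
      exact hnx ⟨h, hx⟩
    rw [dif_pos hx0]

private lemma sq_aux : ∀ m : ℕ, 1 ≤ m → m ≤ 3 → m ^ 2 + 3 ≤ 4 * m := by
  intro m h1 h3
  interval_cases m <;> norm_num

private lemma int_term_nonneg (m : ℤ) : (0 : ℤ) ≤ (8 * m - 8) * (8 * m - 16) := by
  rcases le_or_gt m 1 with h | h
  · calc (0:ℤ) ≤ (8 - 8 * m) * (16 - 8 * m) :=
        mul_nonneg (by linarith) (by linarith)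
      _ = (8 * m - 8) * (8 * m - 16) := by ring
  · have h2 : 2 ≤ m := h
    exact mul_nonneg (by linarith) (by linarith)

/-- The main combinatorial contradiction. -/
private lemma master [Fintype V] [DecidableEq V]
    (M : Projectivization (ZMod 2) V → ℕ)
    (hdiv : IsDivisible 8 M) (hcard : MVal M ⊤ = 24) (hγ : ∀ P, M P ≤ 3) : False := by
  classical
  set n := finrank (ZMod 2) V with hn
  set f : V → ℕ := fun x => if h : x = 0 then 0 else M (Projectivization.mk (ZMod 2) x h)
    with hf
  have hf0 : f 0 = 0 := by simp [hf]
  have hf3 : ∀ x, f x ≤ 3 := by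
    intro x
    by_cases h : x = 0 <;> simp [hf, h, hγ]
  have hbridge : ∀ K : Submodule (ZMod 2) V,
      MVal M K = ∑ x ∈ Finset.univ.filter (fun x : V => x ∈ K), f x :=
    fun K => MVal_eq_sum M K
  have htot : ∑ x : V, f x = 24 := by
    have h := hbridge ⊤
    rw [hcard] at h
    rw [Finset.filter_true_of_mem (fun x _ => Submodule.mem_top)] at h
    exact h.symm
  set T : Finset V := Finset.univ.filter fun x => f x ≠ 0 with hT
  have hsumT : ∑ x ∈ T, f x = 24 := by
    rw [hT, Finset.sum_filter_ne_zero]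
    exact htot
  have hTne : ∀ x ∈ T, x ≠ 0 := by
    intro x hx h0
    rw [hT, Finset.mem_filter] at hx
    rw [h0, hf0] at hx
    exact hx.2 rfl
  have hT1 : ∀ x ∈ T, 1 ≤ f x := by
    intro x hx
    rw [hT, Finset.mem_filter] at hx
    omega
  set k := T.card with hk
  have hk8 : 8 ≤ k := by
    have h3 : ∑ x ∈ T, f x ≤ ∑ _x ∈ T, 3 := Finset.sum_le_sum fun x _ => hf3 x
    rw [hsumT, Finset.sum_const, smul_eq_mul] at h3
    omega
  -- the weighted hyperplane multiplicities
  set N : Module.Dual (ZMod 2) V → ℕ :=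
    fun ℓ => ∑ x ∈ T.filter (fun x => ℓ x = 0), f x with hN
  have hNuniv : ∀ ℓ : Module.Dual (ZMod 2) V,
      N ℓ = ∑ x ∈ Finset.univ.filter (fun x : V => ℓ x = 0), f x := by
    intro ℓ
    simp only [hN]
    apply Finset.sum_subset
    · intro x hx
      rw [Finset.mem_filter] at hx ⊢
      exact ⟨Finset.mem_univ x, hx.2⟩
    · intro x hx hnx
      rw [Finset.mem_filter] at hx hnx
      by_contra h
      exact hnx ⟨by rw [hT, Finset.mem_filter]; exact ⟨Finset.mem_univ x, h⟩, hx.2⟩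
  have hNdvd : ∀ ℓ : Module.Dual (ZMod 2) V, 8 ∣ N ℓ := by
    intro ℓ
    by_cases hℓ : ℓ = 0
    · have hflt : T.filter (fun x => ℓ x = 0) = T := by
        apply Finset.filter_true_of_mem
        intro x _
        rw [hℓ]
        rfl
      have : N ℓ = 24 := by
        simp only [hN]
        rw [hflt, hsumT]
      rw [this]
      norm_num
    · obtain ⟨x0, hx0⟩ : ∃ x, ℓ x ≠ 0 := by
        by_contra h
        push_neg at h
        exact hℓ (LinearMap.ext fun x => h x)
      have hx01 : ℓ x0 = 1 := zmod2_eq_one hx0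
      have hsurj : Function.Surjective ℓ := by
        intro c
        exact ⟨c • x0, by rw [map_smul, hx01, smul_eq_mul, mul_one]⟩
      have hrank : finrank (ZMod 2) (LinearMap.ker ℓ) + 1 = n := by
        have h1 := LinearMap.finrank_range_add_finrank_ker ℓ
        rw [LinearMap.range_eq_top.mpr hsurj, finrank_top, Module.finrank_self] at h1
        omega
      have hmod := hdiv (LinearMap.ker ℓ) hrank
      rw [hcard] at hmod
      have hM : MVal M (LinearMap.ker ℓ) = N ℓ := by
        rw [hbridge, hNuniv]
        congr 1
        ext x
        simp [LinearMap.mem_ker]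
      rw [hM] at hmod
      have h8 : N ℓ % 8 = 24 % 8 := hmod
      omega
  -- cardinality of V and bound on n
  have hcardV : Fintype.card V = 2 ^ n := by
    rw [card_eq_pow_finrank (K := ZMod 2), ZMod.card]
  have hD : Fintype.card (Module.Dual (ZMod 2) V) = 2 ^ n := by
    rw [card_eq_pow_finrank (K := ZMod 2), ZMod.card, Subspace.dual_finrank_eq]
  have hn4 : 4 ≤ n := by
    have hsub : T ⊆ Finset.univ.erase 0 := by
      intro x hx
      exact Finset.mem_erase.mpr ⟨hTne x hx, Finset.mem_univ x⟩
    have hcle : k ≤ Fintype.card V - 1 := by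
      have h := Finset.card_le_card hsub
      rw [Finset.card_erase_of_mem (Finset.mem_univ 0), Finset.card_univ] at h
      exact h
    by_contra hcon
    push_neg at hcon
    have : (2 : ℕ) ^ n ≤ 2 ^ 3 := Nat.pow_le_pow_right (by norm_num) (by omega)
    omega
  -- second moment identity
  set s2 := ∑ x ∈ T, (f x) ^ 2 with hs2
  have hsumTZ : ∑ x ∈ T, (f x : ℤ) = 24 := by exact_mod_cast hsumT
  have hcount : ∀ x ∈ T, ∀ y ∈ T,
      ((Finset.univ.filter fun ℓ : Module.Dual (ZMod 2) V => ℓ x = 0 ∧ ℓ y = 0).card)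
        = if x = y then 2 ^ (n - 1) else 2 ^ (n - 2) := by
    intro x hx y hy
    split_ifs with h
    · subst h
      have hst : (Finset.univ.filter fun ℓ : Module.Dual (ZMod 2) V => ℓ x = 0 ∧ ℓ x = 0)
          = (Finset.univ.filter fun ℓ : Module.Dual (ZMod 2) V => ℓ x = 0) := by
        ext ℓ
        simp only [Finset.mem_filter, Finset.mem_univ, true_and, and_self]
      rw [hst]
      exact card_single (hTne x hx)
    · exact card_pair (hTne x hx) (hTne y hy) h (by omega)
  have hNint : ∀ ℓ : Module.Dual (ZMod 2) V,
      (N ℓ : ℤ) = ∑ x ∈ T, (if ℓ x = 0 then (f x : ℤ) else 0) := by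
    intro ℓ
    simp only [hN]
    rw [Finset.sum_filter]
    push_cast
    exact Finset.sum_congr rfl fun x _ => by split_ifs <;> simp
  have hsum1 : ∑ ℓ : Module.Dual (ZMod 2) V, (N ℓ : ℤ) = 2 ^ (n - 1) * 24 := by
    calc ∑ ℓ : Module.Dual (ZMod 2) V, (N ℓ : ℤ)
        = ∑ ℓ : Module.Dual (ZMod 2) V, ∑ x ∈ T, (if ℓ x = 0 then (f x : ℤ) else 0) :=
          Finset.sum_congr rfl fun ℓ _ => hNint ℓ
      _ = ∑ x ∈ T, ∑ ℓ : Module.Dual (ZMod 2) V, (if ℓ x = 0 then (f x : ℤ) else 0) :=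
          Finset.sum_comm
      _ = ∑ x ∈ T, ((2 : ℤ) ^ (n - 1) * (f x : ℤ)) := by
          refine Finset.sum_congr rfl fun x hx => ?_
          rw [← Finset.sum_filter, Finset.sum_const, card_single (hTne x hx), nsmul_eq_mul]
          push_cast
          ring
      _ = 2 ^ (n - 1) * 24 := by
          rw [← Finset.mul_sum, hsumTZ]
  have hsum2 : ∑ ℓ : Module.Dual (ZMod 2) V, (N ℓ : ℤ) * (N ℓ : ℤ)
      = 2 ^ (n - 2) * (576 + (s2 : ℤ)) := by
    have hp2' : (2 : ℤ) ^ (n - 1) = 2 ^ (n - 2) + 2 ^ (n - 2) := by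
      rw [← two_mul, ← pow_succ']
      congr 1
      omega
    have step1 : ∑ ℓ : Module.Dual (ZMod 2) V, (N ℓ : ℤ) * (N ℓ : ℤ)
        = ∑ x ∈ T, ∑ y ∈ T, ∑ ℓ : Module.Dual (ZMod 2) V,
            (if ℓ x = 0 then (f x : ℤ) else 0) * (if ℓ y = 0 then (f y : ℤ) else 0) := by
      have h1 : ∑ ℓ : Module.Dual (ZMod 2) V, (N ℓ : ℤ) * (N ℓ : ℤ)
          = ∑ ℓ : Module.Dual (ZMod 2) V, ∑ x ∈ T, ∑ y ∈ T,
              (if ℓ x = 0 then (f x : ℤ) else 0) * (if ℓ y = 0 then (f y : ℤ) else 0) := by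
        refine Finset.sum_congr rfl fun ℓ _ => ?_
        rw [hNint, Finset.sum_mul_sum]
      rw [h1, Finset.sum_comm]
      exact Finset.sum_congr rfl fun x _ => Finset.sum_comm
    have inner : ∀ x ∈ T, ∀ y ∈ T,
        ∑ ℓ : Module.Dual (ZMod 2) V,
            (if ℓ x = 0 then (f x : ℤ) else 0) * (if ℓ y = 0 then (f y : ℤ) else 0)
          = (if x = y then (2 : ℤ) ^ (n - 1) else 2 ^ (n - 2)) * ((f x : ℤ) * (f y : ℤ)) := by
      intro x hx y hy
      have h1 : ∀ ℓ : Module.Dual (ZMod 2) V,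
          (if ℓ x = 0 then (f x : ℤ) else 0) * (if ℓ y = 0 then (f y : ℤ) else 0)
            = if ℓ x = 0 ∧ ℓ y = 0 then (f x : ℤ) * (f y : ℤ) else 0 := by
        intro ℓ
        by_cases h1 : ℓ x = 0 <;> by_cases h2 : ℓ y = 0 <;> simp [h1, h2]
      rw [Finset.sum_congr rfl fun ℓ _ => h1 ℓ, ← Finset.sum_filter, Finset.sum_const,
        hcount x hx y hy]
      split_ifs with h <;> · rw [nsmul_eq_mul]; push_cast; ring
    have step2 : ∑ x ∈ T, ∑ y ∈ T,
        (if x = y then (2 : ℤ) ^ (n - 1) else 2 ^ (n - 2)) * ((f x : ℤ) * (f y : ℤ))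
        = ∑ x ∈ T, ∑ y ∈ T,
          ((2 : ℤ) ^ (n - 2) * ((f x : ℤ) * (f y : ℤ))
            + (if x = y then (2 : ℤ) ^ (n - 2) else 0) * ((f x : ℤ) * (f y : ℤ))) := by
      refine Finset.sum_congr rfl fun x _ => Finset.sum_congr rfl fun y _ => ?_
      split_ifs with h
      · rw [hp2']; ring
      · ring
    have hA : ∑ x ∈ T, ∑ y ∈ T, (2 : ℤ) ^ (n - 2) * ((f x : ℤ) * (f y : ℤ))
        = 2 ^ (n - 2) * 576 := by
      have hin : ∀ x ∈ T, ∑ y ∈ T, (2 : ℤ) ^ (n - 2) * ((f x : ℤ) * (f y : ℤ))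
          = (2 : ℤ) ^ (n - 2) * ((f x : ℤ) * 24) := by
        intro x _
        rw [← Finset.mul_sum, ← Finset.mul_sum, hsumTZ]
      rw [Finset.sum_congr rfl hin]
      have : ∑ x ∈ T, (2 : ℤ) ^ (n - 2) * ((f x : ℤ) * 24)
          = (2 : ℤ) ^ (n - 2) * ((∑ x ∈ T, (f x : ℤ)) * 24) := by
        rw [Finset.sum_mul, ← Finset.mul_sum]
      rw [this, hsumTZ]
      norm_num
    have hB : ∑ x ∈ T, ∑ y ∈ T,
        (if x = y then (2 : ℤ) ^ (n - 2) else 0) * ((f x : ℤ) * (f y : ℤ))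
        = 2 ^ (n - 2) * (s2 : ℤ) := by
      have hin : ∀ x ∈ T, ∑ y ∈ T,
          (if x = y then (2 : ℤ) ^ (n - 2) else 0) * ((f x : ℤ) * (f y : ℤ))
          = (2 : ℤ) ^ (n - 2) * ((f x : ℤ) * (f x : ℤ)) := by
        intro x hx
        have h1 : ∀ y ∈ T, (if x = y then (2 : ℤ) ^ (n - 2) else 0) * ((f x : ℤ) * (f y : ℤ))
            = if x = y then (2 : ℤ) ^ (n - 2) * ((f x : ℤ) * (f y : ℤ)) else 0 := by
          intro y _
          split_ifs <;> ring
        rw [Finset.sum_congr rfl h1, Finset.sum_ite_eq T x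
          (fun y => (2 : ℤ) ^ (n - 2) * ((f x : ℤ) * (f y : ℤ))), if_pos hx]
      rw [Finset.sum_congr rfl hin, ← Finset.mul_sum]
      congr 1
      rw [hs2]
      push_cast
      exact Finset.sum_congr rfl fun x _ => by ring
    rw [step1,
      Finset.sum_congr rfl (fun x hx => Finset.sum_congr rfl (fun y hy => inner x hx y hy)),
      step2]
    rw [Finset.sum_congr rfl fun x _ => Finset.sum_add_distrib, Finset.sum_add_distrib,
      hA, hB]
    ring
  have key : ∑ ℓ : Module.Dual (ZMod 2) V, ((N ℓ : ℤ) - 8) * ((N ℓ : ℤ) - 16)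
      = 2 ^ (n - 2) * ((s2 : ℤ) - 64) := by
    have hexp : ∀ ℓ : Module.Dual (ZMod 2) V, ((N ℓ : ℤ) - 8) * ((N ℓ : ℤ) - 16)
        = (N ℓ : ℤ) * (N ℓ : ℤ) - 24 * (N ℓ : ℤ) + 128 := fun ℓ => by ring
    rw [Finset.sum_congr rfl fun ℓ _ => hexp ℓ, Finset.sum_add_distrib,
      Finset.sum_sub_distrib, hsum2, ← Finset.mul_sum, hsum1, Finset.sum_const,
      Finset.card_univ, hD, nsmul_eq_mul]
    have e1 : (2 : ℤ) ^ (n - 1) = 2 * 2 ^ (n - 2) := by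
      rw [← pow_succ']
      congr 1
      omega
    have e2 : (2 : ℤ) ^ n = 4 * 2 ^ (n - 2) := by
      have h4 : (4 : ℤ) = 2 ^ 2 := by norm_num
      rw [h4, ← pow_add]
      congr 1
      omega
    push_cast
    rw [e1, e2]
    ring
  -- basis inside the support
  obtain ⟨sB, hsBsub, hsBspan, hsBli⟩ := exists_linearIndependent (ZMod 2) ((T : Set V))
  have hsBfin : sB.Finite := T.finite_toSet.subset hsBsub
  set B : Finset V := hsBfin.toFinset with hB
  have hmemB : ∀ z : V, z ∈ B ↔ z ∈ sB := by
    intro z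
    rw [hB, Set.Finite.mem_toFinset]
  have hBsubT : B ⊆ T := by
    intro b hb
    exact Finset.mem_coe.mp (hsBsub ((hmemB b).mp hb))
  set r := B.card with hr
  have hkrle : k ≤ r + 2 := by
    -- lower bound for the key sum from the annihilator
    have hann := card_ann (V := V) sB hsBfin hsBli
    have hannle : (128 : ℤ) * 2 ^ (n - r) ≤ 2 ^ (n - 2) * ((s2 : ℤ) - 64) := by
      rw [← key]
      have hsub : (Finset.univ.filter
          fun ℓ : Module.Dual (ZMod 2) V => ∀ b ∈ sB, ℓ b = 0) ⊆ Finset.univ :=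
        Finset.filter_subset _ _
      have hterm : ∀ ℓ : Module.Dual (ZMod 2) V,
          (0 : ℤ) ≤ ((N ℓ : ℤ) - 8) * ((N ℓ : ℤ) - 16) := by
        intro ℓ
        obtain ⟨m, hm⟩ := hNdvd ℓ
        have hmz : (N ℓ : ℤ) = 8 * (m : ℤ) := by exact_mod_cast hm
        rw [hmz]
        exact int_term_nonneg (m : ℤ)
      have hval : ∀ ℓ ∈ (Finset.univ.filter
          fun ℓ : Module.Dual (ZMod 2) V => ∀ b ∈ sB, ℓ b = 0),
          ((N ℓ : ℤ) - 8) * ((N ℓ : ℤ) - 16) = 128 := by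
        intro ℓ hℓ
        rw [Finset.mem_filter] at hℓ
        have hN24 : N ℓ = 24 := by
          simp only [hN]
          have hflt : T.filter (fun x => ℓ x = 0) = T := by
            apply Finset.filter_true_of_mem
            intro x hx
            have hxs : x ∈ Submodule.span (ZMod 2) sB := by
              rw [hsBspan]
              exact Submodule.subset_span (Finset.mem_coe.mpr hx)
            have hsp : Submodule.span (ZMod 2) sB ≤ LinearMap.ker ℓ := by
              rw [Submodule.span_le]
              intro b hb
              rw [SetLike.mem_coe, LinearMap.mem_ker]
              exact hℓ.2 b hb
            have := hsp hxs
            rwa [LinearMap.mem_ker] at this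
          rw [hflt, hsumT]
        rw [hN24]
        norm_num
      calc (128 : ℤ) * 2 ^ (n - r)
          = ∑ ℓ ∈ (Finset.univ.filter
              fun ℓ : Module.Dual (ZMod 2) V => ∀ b ∈ sB, ℓ b = 0),
              ((N ℓ : ℤ) - 8) * ((N ℓ : ℤ) - 16) := by
            rw [Finset.sum_congr rfl hval, Finset.sum_const, hann, nsmul_eq_mul]
            push_cast
            ring
        _ ≤ ∑ ℓ : Module.Dual (ZMod 2) V, ((N ℓ : ℤ) - 8) * ((N ℓ : ℤ) - 16) :=
            Finset.sum_le_sum_of_subset_of_nonneg hsub (fun ℓ _ _ => hterm ℓ)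
    -- the quadratic bound on s2
    have hs2le : s2 + 3 * k ≤ 96 := by
      have hpt : ∀ x ∈ T, (f x) ^ 2 + 3 ≤ 4 * f x := by
        intro x hx
        exact sq_aux (f x) (hT1 x hx) (hf3 x)
      have h1 : ∑ x ∈ T, ((f x) ^ 2 + 3) ≤ ∑ x ∈ T, 4 * f x := Finset.sum_le_sum hpt
      rw [Finset.sum_add_distrib, Finset.sum_const, ← Finset.mul_sum, hsumT,
        smul_eq_mul] at h1
      omega
    -- rank bound
    have hrn : r ≤ n := by
      haveI := hsBfin.fintype
      have htof : sB.toFinset = B := by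
        ext z
        rw [Set.mem_toFinset, hmemB]
      have hfr : finrank (ZMod 2) (Submodule.span (ZMod 2) sB) = r := by
        rw [finrank_span_set_eq_card hsBli, htof]
      have := Submodule.finrank_le (Submodule.span (ZMod 2) sB)
      omega
    rcases le_or_gt r 9 with hr9 | hr9
    · have heq : (128 : ℤ) * 2 ^ (n - r) = 2 ^ (n - 2) * 2 ^ (9 - r) := by
        have h128 : (128 : ℤ) = 2 ^ 7 := by norm_num
        rw [h128, ← pow_add, ← pow_add]
        congr 1
        omega
      rw [heq] at hannle
      have hc : (2 : ℤ) ^ (9 - r) ≤ (s2 : ℤ) - 64 :=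
        le_of_mul_le_mul_left hannle (by positivity)
      have hcn : 2 ^ (9 - r) + 64 ≤ s2 := by
        have h2 : ((2 : ℤ) ^ (9 - r) + 64) ≤ (s2 : ℤ) := by linarith
        exact_mod_cast h2
      have he3 : 9 - r ≤ 3 := by
        by_contra hcon
        push_neg at hcon
        have : 2 ^ 4 ≤ 2 ^ (9 - r) := Nat.pow_le_pow_right (by norm_num) hcon
        omega
      have h9r : 9 - r = 0 ∨ 9 - r = 1 ∨ 9 - r = 2 ∨ 9 - r = 3 := by omega
      rcases h9r with h | h | h | h <;> rw [h] at hcn <;> norm_num at hcn <;> omega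
    · have h65 : 65 ≤ s2 := by
        have hp1 : (0 : ℤ) < 2 ^ (n - 2) := by positivity
        have hp2 : (0 : ℤ) < 2 ^ (n - r) := by positivity
        have h1 : (128 : ℤ) ≤ 128 * 2 ^ (n - r) := by nlinarith
        have h2 : (0 : ℤ) < (s2 : ℤ) - 64 := by
          by_contra hcon
          push_neg at hcon
          have : 2 ^ (n - 2) * ((s2 : ℤ) - 64) ≤ 0 :=
            mul_nonpos_of_nonneg_of_nonpos (by positivity) hcon
          linarith
        have : (64 : ℤ) < (s2 : ℤ) := by linarith
        exact_mod_cast this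
      omega
  -- final pigeonhole
  set E : Finset V := T \ B with hE
  have hEcard : E.card ≤ 2 := by
    rw [hE, Finset.card_sdiff_of_subset hBsubT]
    omega
  have hTBE : B ∪ E = T := Finset.union_sdiff_of_subset hBsubT
  have hdisj : Disjoint B E := Finset.disjoint_sdiff
  have hET : E ⊆ T := by
    rw [hE]
    exact Finset.sdiff_subset
  have hEspan : ∀ y ∈ E, ∃ S : Finset V, S ⊆ B ∧ S.Nonempty ∧ y = ∑ b ∈ S, b := by
    intro y hyE
    have hyT : y ∈ T := hET hyE
    have hyM : y ∈ Submodule.span (ZMod 2) ((B : Finset V) : Set V) := by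
      have hBc : ((B : Finset V) : Set V) = sB := by
        ext z
        rw [Finset.mem_coe, hmemB]
      rw [hBc, hsBspan]
      exact Submodule.subset_span (Finset.mem_coe.mpr hyT)
    rw [Submodule.mem_span_finset] at hyM
    obtain ⟨c, -, hc⟩ := hyM
    refine ⟨B.filter (fun b => c b ≠ 0), Finset.filter_subset _ _, ?_, ?_⟩
    · by_contra hemp
      rw [Finset.not_nonempty_iff_eq_empty, Finset.filter_eq_empty_iff] at hemp
      have hy0 : y = 0 := by
        rw [← hc]
        apply Finset.sum_eq_zero
        intro b hb
        have hcb : c b = 0 := not_not.mp (hemp hb)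
        rw [hcb, zero_smul]
      exact hTne y hyT hy0
    · rw [← hc, Finset.sum_filter]
      refine Finset.sum_congr rfl fun b _ => ?_
      by_cases h : c b = 0
      · simp [h]
      · rw [if_pos h, zmod2_eq_one h, one_smul]
  have hEvalSum : ∀ (bb : V) (ℓ : Module.Dual (ZMod 2) V),
      ℓ bb = 1 → (∀ z ∈ B, z ≠ bb → ℓ z = 0) →
      ∀ S : Finset V, S ⊆ B → ℓ (∑ x ∈ S, x) = (if bb ∈ S then 1 else 0) := by
    intro bb ℓ h1 h0 S hS
    rw [map_sum]
    have hterm : ∀ x ∈ S, ℓ x = if x = bb then (1 : ZMod 2) else 0 := by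
      intro x hx
      by_cases h : x = bb
      · rw [if_pos h, h, h1]
      · rw [if_neg h, h0 x (hS hx) h]
    rw [Finset.sum_congr rfl hterm]
    exact Finset.sum_ite_eq' S bb (fun _ => (1 : ZMod 2))
  have hgetl : ∀ bb ∈ B, ∃ ℓ : Module.Dual (ZMod 2) V,
      ℓ bb = 1 ∧ ∀ z ∈ B, z ≠ bb → ℓ z = 0 := by
    intro bb hbb
    obtain ⟨ℓ, hℓ1, hℓ0⟩ := exists_coord hsBli ((hmemB bb).mp hbb)
    exact ⟨ℓ, hℓ1, fun z hz hzne => hℓ0 z ((hmemB z).mp hz) hzne⟩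
  have hwfin : ∀ ℓ : Module.Dual (ZMod 2) V,
      N ℓ + ∑ x ∈ T.filter (fun x => ¬ ℓ x = 0), f x = 24 := by
    intro ℓ
    simp only [hN]
    rw [Finset.sum_filter_add_sum_filter_not T (fun x => ℓ x = 0) f, hsumT]
  have hwsplit : ∀ ℓ : Module.Dual (ZMod 2) V,
      ∑ x ∈ T.filter (fun x => ¬ ℓ x = 0), f x
        = (∑ x ∈ B, if ¬ ℓ x = 0 then f x else 0)
          + (∑ y ∈ E, if ¬ ℓ y = 0 then f y else 0) := by
    intro ℓ
    rw [Finset.sum_filter, ← hTBE, Finset.sum_union hdisj]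
  have hBpart : ∀ bb ∈ B, ∀ ℓ : Module.Dual (ZMod 2) V, ℓ bb = 1 →
      (∀ z ∈ B, z ≠ bb → ℓ z = 0) →
      (∑ x ∈ B, if ¬ ℓ x = 0 then f x else 0) = f bb := by
    intro bb hbb ℓ h1 h0
    rw [Finset.sum_eq_single bb]
    · rw [if_pos (by rw [h1]; exact one_ne_zero)]
    · intro z hz hne
      rw [if_neg (not_not_intro (h0 z hz hne))]
    · intro h
      exact absurd hbb h
  have hfinal : ∃ (ℓ : Module.Dual (ZMod 2) V) (w : ℕ),
      w = ∑ x ∈ T.filter (fun x => ¬ ℓ x = 0), f x ∧ 1 ≤ w ∧ w ≤ 6 := by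
    have hBne : B.Nonempty := by
      rw [← Finset.card_pos]
      omega
    rcases (show E.card = 0 ∨ E.card = 1 ∨ E.card = 2 by omega) with h0 | h1 | h2
    · obtain ⟨bb, hbb⟩ := hBne
      obtain ⟨ℓ, hℓ1, hℓ0⟩ := hgetl bb hbb
      have hEe : E = ∅ := Finset.card_eq_zero.mp h0
      have hw : ∑ x ∈ T.filter (fun x => ¬ ℓ x = 0), f x = f bb := by
        rw [hwsplit, hBpart bb hbb ℓ hℓ1 hℓ0, hEe, Finset.sum_empty, add_zero]
      refine ⟨ℓ, _, rfl, ?_, ?_⟩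
      · rw [hw]
        exact hT1 bb (hBsubT hbb)
      · rw [hw]
        have := hf3 bb
        omega
    · obtain ⟨y, hy⟩ := Finset.card_eq_one.mp h1
      have hyE : y ∈ E := by
        rw [hy]
        exact Finset.mem_singleton_self y
      obtain ⟨S, hSB, ⟨bb, hbbS⟩, hyS⟩ := hEspan y hyE
      have hbb : bb ∈ B := hSB hbbS
      obtain ⟨ℓ, hℓ1, hℓ0⟩ := hgetl bb hbb
      have hly : ℓ y = 1 := by
        rw [hyS, hEvalSum bb ℓ hℓ1 hℓ0 S hSB, if_pos hbbS]
      have hw : ∑ x ∈ T.filter (fun x => ¬ ℓ x = 0), f x = f bb + f y := by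
        rw [hwsplit, hBpart bb hbb ℓ hℓ1 hℓ0, hy, Finset.sum_singleton,
          if_pos (by rw [hly]; exact one_ne_zero)]
      refine ⟨ℓ, _, rfl, ?_, ?_⟩
      · rw [hw]
        have := hT1 bb (hBsubT hbb)
        omega
      · rw [hw]
        have := hf3 bb
        have := hf3 y
        omega
    · obtain ⟨y1, y2, hne, hy⟩ := Finset.card_eq_two.mp h2
      have hy1E : y1 ∈ E := by
        rw [hy]
        exact Finset.mem_insert_self y1 {y2}
      have hy2E : y2 ∈ E := by
        rw [hy]
        exact Finset.mem_insert_of_mem (Finset.mem_singleton_self y2)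
      obtain ⟨S1, hS1B, hS1ne, hyS1⟩ := hEspan y1 hy1E
      obtain ⟨S2, hS2B, hS2ne, hyS2⟩ := hEspan y2 hy2E
      have hSS : S1 ≠ S2 := by
        intro h
        apply hne
        rw [hyS1, hyS2, h]
      have hsym : ∃ bb, (bb ∈ S1 ∧ bb ∉ S2) ∨ (bb ∈ S2 ∧ bb ∉ S1) := by
        by_contra hcon
        push_neg at hcon
        apply hSS
        ext z
        have h1 := hcon z
        tauto
      obtain ⟨bb, hbbcase⟩ := hsym
      rcases hbbcase with ⟨hb1, hb2⟩ | ⟨hb1, hb2⟩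
      · have hbb : bb ∈ B := hS1B hb1
        obtain ⟨ℓ, hℓ1, hℓ0⟩ := hgetl bb hbb
        have hly1 : ℓ y1 = 1 := by
          rw [hyS1, hEvalSum bb ℓ hℓ1 hℓ0 S1 hS1B, if_pos hb1]
        have hly2 : ℓ y2 = 0 := by
          rw [hyS2, hEvalSum bb ℓ hℓ1 hℓ0 S2 hS2B, if_neg hb2]
        have hw : ∑ x ∈ T.filter (fun x => ¬ ℓ x = 0), f x = f bb + f y1 := by
          rw [hwsplit, hBpart bb hbb ℓ hℓ1 hℓ0, hy, Finset.sum_pair hne,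
            if_pos (by rw [hly1]; exact one_ne_zero),
            if_neg (not_not_intro hly2), add_zero]
        refine ⟨ℓ, _, rfl, ?_, ?_⟩
        · rw [hw]
          have := hT1 bb (hBsubT hbb)
          omega
        · rw [hw]
          have := hf3 bb
          have := hf3 y1
          omega
      · have hbb : bb ∈ B := hS2B hb1
        obtain ⟨ℓ, hℓ1, hℓ0⟩ := hgetl bb hbb
        have hly1 : ℓ y1 = 0 := by
          rw [hyS1, hEvalSum bb ℓ hℓ1 hℓ0 S1 hS1B, if_neg hb2]
        have hly2 : ℓ y2 = 1 := by
          rw [hyS2, hEvalSum bb ℓ hℓ1 hℓ0 S2 hS2B, if_pos hb1]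
        have hw : ∑ x ∈ T.filter (fun x => ¬ ℓ x = 0), f x = f bb + f y2 := by
          rw [hwsplit, hBpart bb hbb ℓ hℓ1 hℓ0, hy, Finset.sum_pair hne,
            if_neg (not_not_intro hly1),
            if_pos (by rw [hly2]; exact one_ne_zero), zero_add]
        refine ⟨ℓ, _, rfl, ?_, ?_⟩
        · rw [hw]
          have := hT1 bb (hBsubT hbb)
          omega
        · rw [hw]
          have := hf3 bb
          have := hf3 y2
          omega
  obtain ⟨ℓ, w, hweq, hw1, hw6⟩ := hfinal
  have h24 := hwfin ℓ
  obtain ⟨m, hm⟩ := hNdvd ℓ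
  omega

end Aux

theorem stmt_15 (v : ℕ) (M : Projectivization (ZMod 2) (Fin v → ZMod 2) → ℕ)
    (hdiv : IsDivisible 8 M) (hcard : MVal M ⊤ = 24) (hγ : ∀ P, M P ≤ 3) : False := by
  exact master M hdiv hcard hγ
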